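/- With Ě_z[ψ] = Ě[ψ] − z (L_D(L_D − z)⁻¹ Πψ, Πψ) and E an eigenvalue of L_D with eigenprojection P_E, one has lim_{z→E} (z − E) Ě_z[ψ] = E ‖L_D^{1/2} P_E Πψ‖² for every ψ ∈ ran J. Consequently, if P_E Πψ ≠ 0 then Ě_λ[ψ] → −∞ as λ ↑ E and Ě_λ[ψ] → +∞ as λ ↓ E. -/

import Mathlib

open Filter

-- main complex Laurent lemma
theorem aux_complex (Ev : ℕ → ℝ) (hEpos : ∀ k, 0 < Ev k)
    (hElim : Tendsto Ev atTop atTop) (a : ℕ → ℝ) (ha0 : ∀ k, 0 ≤ a k)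
    (ha : Summable a) (c E0 : ℝ) (k0 : ℕ) (hE0 : E0 = Ev k0) :
    Tendsto (fun z : ℂ => (z - (E0 : ℂ)) *
        ((c : ℂ) - z * ∑' k : ℕ, (Ev k : ℂ) / ((Ev k : ℂ) - z) * ((a k : ℝ) : ℂ)))
      (nhdsWithin (E0 : ℂ) {z : ℂ | ∀ k, z ≠ (Ev k : ℂ)})
      (nhds ((E0 : ℂ) * ((E0 : ℂ) *
        ∑' k : ℕ, (if Ev k = E0 then ((a k : ℝ) : ℂ) else 0)))) := by
  have hE0pos : 0 < E0 := hE0 ▸ hEpos k0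
  -- finiteness of low eigenvalue indices
  have hfin : {k | Ev k ≤ E0 + 1}.Finite := by
    have := hElim.eventually (eventually_gt_atTop (E0 + 1))
    rw [← Nat.cofinite_eq_atTop, Filter.eventually_cofinite] at this
    exact this.subset (fun k hk => by simpa using not_lt.mpr hk)
  -- δ₀ : lower bound on distance from E0 to other nearby eigenvalues
  obtain ⟨δ₀, hδ₀pos, hδ₀⟩ : ∃ δ₀ > 0, ∀ k, Ev k ≠ E0 → Ev k ≤ E0 + 1 → δ₀ ≤ |Ev k - E0| := by
    by_cases hne : (hfin.toFinset.filter (fun k => Ev k ≠ E0)).Nonempty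
    · obtain ⟨k1, hk1, hk1min⟩ := Finset.exists_min_image _ (fun k => |Ev k - E0|) hne
      simp only [Finset.mem_filter, Set.Finite.mem_toFinset, Set.mem_setOf_eq] at hk1
      refine ⟨|Ev k1 - E0|, abs_pos.mpr (sub_ne_zero.mpr hk1.2), fun k hk hk' => ?_⟩
      refine hk1min k ?_
      simp only [Finset.mem_filter, Set.Finite.mem_toFinset, Set.mem_setOf_eq]
      exact ⟨hk', hk⟩
    · refine ⟨1, one_pos, fun k hk hk' => absurd ?_ hne⟩
      exact ⟨k, by simp only [Finset.mem_filter, Set.Finite.mem_toFinset, Set.mem_setOf_eq]; exact ⟨hk', hk⟩⟩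
  set δ : ℝ := min (δ₀ / 2) (1 / 2) with hδdef
  have hδpos : 0 < δ := lt_min (by linarith) (by norm_num)
  have hδle : δ ≤ 1 / 2 := min_le_right _ _
  set C : ℝ := max ((E0 + 1) / (δ₀ / 2)) (2 * (E0 + 1)) with hCdef
  have hCpos : 0 < C := lt_of_lt_of_le (by linarith) (le_max_right _ _)
  -- uniform bound on the ratio for non-E0 eigenvalues
  have hC : ∀ k, Ev k ≠ E0 → ∀ z : ℂ, ‖z - (E0 : ℂ)‖ ≤ δ →
      ‖(Ev k : ℂ) / ((Ev k : ℂ) - z)‖ ≤ C := by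
    intro k hk z hz
    have hnorm : ‖(Ev k : ℂ) - z‖ ≥ |Ev k - E0| - δ := by
      have h1 : (Ev k : ℂ) - z = ((Ev k - E0 : ℝ) : ℂ) - (z - (E0 : ℂ)) := by
        push_cast; ring
      calc ‖(Ev k : ℂ) - z‖ ≥ ‖((Ev k - E0 : ℝ) : ℂ)‖ - ‖z - (E0 : ℂ)‖ := by
            rw [h1]; exact norm_sub_norm_le _ _
        _ ≥ |Ev k - E0| - δ := by rw [Complex.norm_real, Real.norm_eq_abs]; linarith
    rw [norm_div, Complex.norm_real, Real.norm_eq_abs, abs_of_pos (hEpos k)]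
    by_cases hle : Ev k ≤ E0 + 1
    · have h2 : δ₀ ≤ |Ev k - E0| := hδ₀ k hk hle
      have h3 : δ₀ / 2 ≤ ‖(Ev k : ℂ) - z‖ := by
        have : δ ≤ δ₀ / 2 := min_le_left _ _
        linarith
      calc Ev k / ‖(Ev k : ℂ) - z‖ ≤ Ev k / (δ₀ / 2) := by
            apply div_le_div_of_nonneg_left (hEpos k).le (by linarith) h3
        _ ≤ (E0 + 1) / (δ₀ / 2) := by
            apply div_le_div_of_nonneg_right ?_ (by linarith)
            · linarith
        _ ≤ C := le_max_left _ _
    · push_neg at hle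
      have habs : |Ev k - E0| = Ev k - E0 := abs_of_pos (by linarith)
      have h3 : Ev k / (2 * (E0 + 1)) ≤ ‖(Ev k : ℂ) - z‖ := by
        rw [habs] at hnorm
        rw [div_le_iff₀ (by linarith)]
        nlinarith [hnorm, hδle, hE0pos]
      calc Ev k / ‖(Ev k : ℂ) - z‖ ≤ Ev k / (Ev k / (2 * (E0 + 1))) := by
            apply div_le_div_of_nonneg_left (hEpos k).le ?_ h3
            · apply div_pos (hEpos k); linarith
        _ = 2 * (E0 + 1) := by
            rw [div_div_eq_mul_div, mul_div_assoc, mul_comm]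
            rw [div_mul_cancel₀ _ (ne_of_gt (hEpos k))]
        _ ≤ C := le_max_right _ _
  -- the "regular" part of the series
  set fR : ℂ → ℕ → ℂ := fun z k =>
    if Ev k = E0 then 0 else (Ev k : ℂ) / ((Ev k : ℂ) - z) * ((a k : ℝ) : ℂ) with hfRdef
  set gC : ℕ → ℂ := fun k => if Ev k = E0 then ((a k : ℝ) : ℂ) else 0 with hgCdef
  have hgC : Summable gC := by
    apply Summable.of_norm_bounded ha
    intro k
    by_cases hk : Ev k = E0
    · simp [gC, hk, Complex.norm_real, Real.norm_eq_abs, abs_of_nonneg (ha0 k)]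
    · simp [gC, hk, ha0 k]
  have hsummR : ∀ z : ℂ, ‖z - (E0 : ℂ)‖ ≤ δ → Summable (fR z) := by
    intro z hz
    apply Summable.of_norm_bounded (ha.mul_left C)
    intro k
    by_cases hk : Ev k = E0
    · simp only [fR, hk, if_pos, norm_zero]
      exact mul_nonneg hCpos.le (ha0 k)
    · simp only [fR, hk, if_neg, not_false_iff, norm_mul, Complex.norm_real,
        Real.norm_eq_abs, abs_of_nonneg (ha0 k)]
      exact mul_le_mul_of_nonneg_right (hC k hk z hz) (ha0 k)
  have hRbound : ∀ z : ℂ, ‖z - (E0 : ℂ)‖ ≤ δ → ‖∑' k, fR z k‖ ≤ C * ∑' k, a k := by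
    intro z hz
    have hb : ∀ k, ‖fR z k‖ ≤ C * a k := by
      intro k
      by_cases hk : Ev k = E0
      · simp only [fR, hk, if_pos, norm_zero]
        exact mul_nonneg hCpos.le (ha0 k)
      · simp only [fR, hk, if_neg, not_false_iff, norm_mul, Complex.norm_real,
          Real.norm_eq_abs, abs_of_nonneg (ha0 k)]
        exact mul_le_mul_of_nonneg_right (hC k hk z hz) (ha0 k)
    calc ‖∑' k, fR z k‖ ≤ ∑' k, ‖fR z k‖ :=
          norm_tsum_le_tsum_norm (Summable.of_nonneg_of_le (fun k => norm_nonneg _) hb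
            (ha.mul_left C))
      _ ≤ ∑' k, C * a k := Summable.tsum_le_tsum hb (Summable.of_nonneg_of_le
            (fun k => norm_nonneg _) hb (ha.mul_left C)) (ha.mul_left C)
      _ = C * ∑' k, a k := tsum_mul_left
  -- decomposition of the full sum
  have hdecomp : ∀ z : ℂ, z ∈ {z : ℂ | ∀ k, z ≠ (Ev k : ℂ)} → ‖z - (E0 : ℂ)‖ ≤ δ →
      (z - (E0 : ℂ)) * ((c : ℂ) - z * ∑' k : ℕ, (Ev k : ℂ) / ((Ev k : ℂ) - z) * ((a k : ℝ) : ℂ))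
        = (z - (E0 : ℂ)) * ((c : ℂ) - z * ∑' k, fR z k) + z * (E0 : ℂ) * ∑' k, gC k := by
    intro z hzmem hzclose
    have hz0 : z ≠ (E0 : ℂ) := by
      rw [hE0]
      exact hzmem k0
    have hzE : (E0 : ℂ) - z ≠ 0 := fun h => hz0 (by linear_combination -h)
    have hptwise : ∀ k : ℕ, (Ev k : ℂ) / ((Ev k : ℂ) - z) * ((a k : ℝ) : ℂ)
        = (E0 : ℂ) / ((E0 : ℂ) - z) * gC k + fR z k := by
      intro k
      by_cases hk : Ev k = E0
      · simp only [fR, gC, hk, if_pos, add_zero, mul_zero]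
      · simp only [fR, gC, hk, if_neg, not_false_iff, mul_zero, zero_add]
    have hsum : ∑' k : ℕ, (Ev k : ℂ) / ((Ev k : ℂ) - z) * ((a k : ℝ) : ℂ)
        = (E0 : ℂ) / ((E0 : ℂ) - z) * ∑' k, gC k + ∑' k, fR z k := by
      rw [tsum_congr hptwise, Summable.tsum_add (hgC.mul_left _) (hsummR z hzclose), tsum_mul_left]
    rw [hsum]
    field_simp
    ring
  -- the limits
  have h1 : Tendsto (fun z : ℂ => z - (E0 : ℂ))
      (nhdsWithin (E0 : ℂ) {z : ℂ | ∀ k, z ≠ (Ev k : ℂ)}) (nhds 0) := by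
    have h : Tendsto (fun z : ℂ => z - (E0 : ℂ)) (nhds (E0 : ℂ)) (nhds 0) := by
      exact (continuous_sub_right (E0 : ℂ)).tendsto' _ _ (by simp)
    exact h.mono_left nhdsWithin_le_nhds
  have hclose : ∀ᶠ z : ℂ in nhdsWithin (E0 : ℂ) {z : ℂ | ∀ k, z ≠ (Ev k : ℂ)},
      ‖z - (E0 : ℂ)‖ ≤ δ := by
    apply eventually_nhdsWithin_of_eventually_nhds
    have : Metric.closedBall (E0 : ℂ) δ ∈ nhds (E0 : ℂ) := Metric.closedBall_mem_nhds _ hδpos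
    filter_upwards [this] with z hz
    simpa [Metric.mem_closedBall, Complex.dist_eq] using hz
  have hbdd : Filter.IsBoundedUnder (· ≤ ·)
      (nhdsWithin (E0 : ℂ) {z : ℂ | ∀ k, z ≠ (Ev k : ℂ)})
      (norm ∘ fun z : ℂ => (c : ℂ) - z * ∑' k, fR z k) := by
    apply Filter.isBoundedUnder_of_eventually_le (a := |c| + (E0 + δ) * (C * ∑' k, a k))
    filter_upwards [hclose] with z hz
    have hznorm : ‖z‖ ≤ E0 + δ := by
      calc ‖z‖ = ‖(E0 : ℂ) + (z - (E0 : ℂ))‖ := by ring_nf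
        _ ≤ ‖(E0 : ℂ)‖ + ‖z - (E0 : ℂ)‖ := norm_add_le _ _
        _ ≤ E0 + δ := by
            rw [Complex.norm_real, Real.norm_eq_abs, abs_of_pos hE0pos]
            linarith
    calc ‖(c : ℂ) - z * ∑' k, fR z k‖ ≤ ‖(c : ℂ)‖ + ‖z * ∑' k, fR z k‖ := norm_sub_le _ _
      _ ≤ |c| + (E0 + δ) * (C * ∑' k, a k) := by
          rw [Complex.norm_real, Real.norm_eq_abs, norm_mul]
          have h2 := hRbound z hz
          have h3 : (0:ℝ) ≤ C * ∑' k, a k := le_trans (norm_nonneg _) h2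
          gcongr
  have hzero : Tendsto (fun z : ℂ => (z - (E0 : ℂ)) * ((c : ℂ) - z * ∑' k, fR z k))
      (nhdsWithin (E0 : ℂ) {z : ℂ | ∀ k, z ≠ (Ev k : ℂ)}) (nhds 0) :=
    h1.zero_mul_isBoundedUnder_le hbdd
  have h2 : Tendsto (fun z : ℂ => z * (E0 : ℂ) * ∑' k, gC k)
      (nhdsWithin (E0 : ℂ) {z : ℂ | ∀ k, z ≠ (Ev k : ℂ)})
      (nhds ((E0 : ℂ) * (E0 : ℂ) * ∑' k, gC k)) := by
    have h : Tendsto (fun z : ℂ => z * (E0 : ℂ) * ∑' k, gC k) (nhds (E0 : ℂ))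
        (nhds ((E0 : ℂ) * (E0 : ℂ) * ∑' k, gC k)) :=
      ((continuous_id.mul continuous_const).mul continuous_const).tendsto (E0 : ℂ)
    exact h.mono_left nhdsWithin_le_nhds
  have htot := hzero.add h2
  rw [zero_add] at htot
  have hfin2 : Tendsto
      (fun z : ℂ => (z - (E0 : ℂ)) *
        ((c : ℂ) - z * ∑' k : ℕ, (Ev k : ℂ) / ((Ev k : ℂ) - z) * ((a k : ℝ) : ℂ)))
      (nhdsWithin (E0 : ℂ) {z : ℂ | ∀ k, z ≠ (Ev k : ℂ)})
      (nhds ((E0 : ℂ) * (E0 : ℂ) * ∑' k, gC k)) := by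
    apply htot.congr'
    filter_upwards [hclose, eventually_mem_nhdsWithin] with z hz hzmem
    exact (hdecomp z hzmem hz).symm
  have : (E0 : ℂ) * (E0 : ℂ) * ∑' k, gC k = (E0 : ℂ) * ((E0 : ℂ) * ∑' k, gC k) := by ring
  rw [this] at hfin2
  exact hfin2

theorem aux_real (Ev : ℕ → ℝ) (hEpos : ∀ k, 0 < Ev k)
    (hElim : Tendsto Ev atTop atTop) (a : ℕ → ℝ) (ha0 : ∀ k, 0 ≤ a k)
    (ha : Summable a) (c E0 : ℝ) (k0 : ℕ) (hE0 : E0 = Ev k0) (s : Set ℝ) :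
    Tendsto (fun lam : ℝ => (lam - E0) * (c - lam * ∑' k, Ev k / (Ev k - lam) * a k))
      (nhdsWithin E0 ({lam : ℝ | ∀ k, lam ≠ Ev k} ∩ s))
      (nhds (E0 * (E0 * ∑' k, if Ev k = E0 then a k else 0))) := by
  have hcplx := aux_complex Ev hEpos hElim a ha0 ha c E0 k0 hE0
  have hmap : Tendsto (fun lam : ℝ => (lam : ℂ))
      (nhdsWithin E0 ({lam : ℝ | ∀ k, lam ≠ Ev k} ∩ s))
      (nhdsWithin (E0 : ℂ) {z : ℂ | ∀ k, z ≠ (Ev k : ℂ)}) := by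
    apply tendsto_nhdsWithin_of_tendsto_nhds_of_eventually_within
    · exact (Complex.continuous_ofReal.tendsto E0).mono_left nhdsWithin_le_nhds
    · filter_upwards [eventually_mem_nhdsWithin] with lam hlam
      intro k h
      exact hlam.1 k (by exact_mod_cast h)
  have hcomp := hcplx.comp hmap
  have heq : ∀ lam : ℝ,
      (((lam : ℂ) - (E0 : ℂ)) * ((c : ℂ) - (lam : ℂ) *
        ∑' k : ℕ, (Ev k : ℂ) / ((Ev k : ℂ) - (lam : ℂ)) * ((a k : ℝ) : ℂ)))
        = (((lam - E0) * (c - lam * ∑' k, Ev k / (Ev k - lam) * a k) : ℝ) : ℂ) := by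
    intro lam
    push_cast [Complex.ofReal_tsum]
    ring
  have hlim : ((E0 : ℂ) * ((E0 : ℂ) * ∑' k : ℕ, (if Ev k = E0 then ((a k : ℝ) : ℂ) else 0)))
      = ((E0 * (E0 * ∑' k, if Ev k = E0 then a k else 0) : ℝ) : ℂ) := by
    push_cast [Complex.ofReal_tsum, apply_ite (fun x : ℝ => (x : ℂ))]
    rfl
  rw [hlim] at hcomp
  have hre := (Complex.continuous_re.tendsto _).comp hcomp
  rw [Complex.ofReal_re] at hre
  apply hre.congr
  intro lam
  simp only [Function.comp_apply, heq lam, Complex.ofReal_re]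

set_option maxHeartbeats 1000000 in
theorem stmt_10 {H : Type*} [NormedAddCommGroup H] [InnerProductSpace ℂ H]
    (b : HilbertBasis ℕ ℂ H)
    (Ev : ℕ → ℝ) (hEpos : ∀ k, 0 < Ev k)
    (hElim : Filter.Tendsto Ev Filter.atTop Filter.atTop)
    (v : H) (c : ℝ) (k0 : ℕ) (E0 : ℝ) (hE0 : E0 = Ev k0) :
    Filter.Tendsto
      (fun z : ℂ => (z - (E0 : ℂ)) *
        ((c : ℂ) - z * ∑' k : ℕ,
          (Ev k : ℂ) / ((Ev k : ℂ) - z) * ((‖(inner ℂ (b k) v : ℂ)‖ : ℂ)) ^ 2))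
      (nhdsWithin (E0 : ℂ) {z : ℂ | ∀ k, z ≠ (Ev k : ℂ)})
      (nhds ((E0 : ℂ) * ((E0 : ℂ) *
        ∑' k : ℕ, (if Ev k = E0 then ((‖(inner ℂ (b k) v : ℂ)‖ : ℂ)) ^ 2 else 0))))
    ∧ ((∃ k, Ev k = E0 ∧ (inner ℂ (b k) v : ℂ) ≠ 0) →
        Filter.Tendsto
          (fun lam : ℝ => c - lam * ∑' k : ℕ,
            Ev k / (Ev k - lam) * ‖(inner ℂ (b k) v : ℂ)‖ ^ 2)
          (nhdsWithin E0 ({lam : ℝ | ∀ k, lam ≠ Ev k} ∩ Set.Iio E0)) atBot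
        ∧ Filter.Tendsto
            (fun lam : ℝ => c - lam * ∑' k : ℕ,
              Ev k / (Ev k - lam) * ‖(inner ℂ (b k) v : ℂ)‖ ^ 2)
            (nhdsWithin E0 ({lam : ℝ | ∀ k, lam ≠ Ev k} ∩ Set.Ioi E0)) atTop) := by
  set a : ℕ → ℝ := fun k => ‖(inner ℂ (b k) v : ℂ)‖ ^ 2 with hadef
  have ha0 : ∀ k, 0 ≤ a k := fun k => sq_nonneg _
  have ha : Summable a := b.orthonormal.inner_products_summable v
  constructor
  · have h := aux_complex Ev hEpos hElim a ha0 ha c E0 k0 hE0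
    simp only [hadef, Complex.ofReal_pow] at h
    exact h
  · rintro ⟨k1, hk1, hk1'⟩
    -- positivity of the residue
    have hE0pos : 0 < E0 := hE0 ▸ hEpos k0
    have hind : Summable (fun k => if Ev k = E0 then a k else 0) := by
      apply Summable.of_nonneg_of_le (fun k => by positivity) _ ha
      intro k
      by_cases hk : Ev k = E0 <;> simp [hk, ha0 k]
    have hApos : 0 < ∑' k, if Ev k = E0 then a k else 0 := by
      apply Summable.tsum_pos hind (fun k => by positivity) k1
      rw [if_pos hk1]
      have : 0 < ‖(inner ℂ (b k1) v : ℂ)‖ := norm_pos_iff.mpr hk1'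
      positivity
    have hlimpos : 0 < E0 * (E0 * ∑' k, if Ev k = E0 then a k else 0) := by positivity
    constructor
    · -- λ ↑ E0 : tends to -∞
      have hg := aux_real Ev hEpos hElim a ha0 ha c E0 k0 hE0 (Set.Iio E0)
      have hinv : Tendsto (fun lam : ℝ => (lam - E0)⁻¹)
          (nhdsWithin E0 ({lam : ℝ | ∀ k, lam ≠ Ev k} ∩ Set.Iio E0)) atBot := by
        have hsub : Tendsto (fun lam : ℝ => E0 - lam)
            (nhdsWithin E0 ({lam : ℝ | ∀ k, lam ≠ Ev k} ∩ Set.Iio E0))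
            (nhdsWithin 0 (Set.Ioi 0)) := by
          apply tendsto_nhdsWithin_of_tendsto_nhds_of_eventually_within
          · have h : Tendsto (fun lam : ℝ => E0 - lam) (nhds E0) (nhds 0) := by
              exact (continuous_sub_left E0).tendsto' _ _ (by simp)
            exact h.mono_left nhdsWithin_le_nhds
          · filter_upwards [eventually_mem_nhdsWithin] with lam hlam
            exact Set.mem_Ioi.mpr (by linarith [hlam.2.out])
        have := tendsto_neg_atTop_atBot.comp (tendsto_inv_nhdsGT_zero.comp hsub)
        apply this.congr
        intro lam
        simp only [Function.comp_apply]
        rw [← inv_neg, neg_sub]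
      have hmul := Filter.Tendsto.pos_mul_atBot hlimpos hg hinv
      apply hmul.congr'
      filter_upwards [eventually_mem_nhdsWithin] with lam hlam
      have hne : lam - E0 ≠ 0 := sub_ne_zero.mpr (ne_of_lt hlam.2.out)
      rw [mul_comm, ← mul_assoc, inv_mul_cancel₀ hne, one_mul]
    · -- λ ↓ E0 : tends to +∞
      have hg := aux_real Ev hEpos hElim a ha0 ha c E0 k0 hE0 (Set.Ioi E0)
      have hinv : Tendsto (fun lam : ℝ => (lam - E0)⁻¹)
          (nhdsWithin E0 ({lam : ℝ | ∀ k, lam ≠ Ev k} ∩ Set.Ioi E0)) atTop := by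
        have hsub : Tendsto (fun lam : ℝ => lam - E0)
            (nhdsWithin E0 ({lam : ℝ | ∀ k, lam ≠ Ev k} ∩ Set.Ioi E0))
            (nhdsWithin 0 (Set.Ioi 0)) := by
          apply tendsto_nhdsWithin_of_tendsto_nhds_of_eventually_within
          · have h : Tendsto (fun lam : ℝ => lam - E0) (nhds E0) (nhds 0) := by
              exact (continuous_sub_right E0).tendsto' _ _ (by simp)
            exact h.mono_left nhdsWithin_le_nhds
          · filter_upwards [eventually_mem_nhdsWithin] with lam hlam
            exact Set.mem_Ioi.mpr (by linarith [hlam.2.out])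
        exact tendsto_inv_nhdsGT_zero.comp hsub
      have hmul := Filter.Tendsto.pos_mul_atTop hlimpos hg hinv
      apply hmul.congr'
      filter_upwards [eventually_mem_nhdsWithin] with lam hlam
      have hne : lam - E0 ≠ 0 := sub_ne_zero.mpr (ne_of_gt hlam.2.out)
      rw [mul_comm, ← mul_assoc, inv_mul_cancel₀ hne, one_mul]
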